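/- On the zero level set of the first integral (E = 0 with Q > 0), the angle variable of the system in the previous lemma satisfies the decoupled ODE Θ'(x) = (n−1)(ω − cos(2Θ)), and Q is recovered from Θ by Q^{n−1} = (cos(2Θ) − ω) / (Σ_{s=0}^{n} A_s cos(2sΘ)), provided the denominator is nonzero. -/
import Mathlib


open Real

/-- On the zero level set of the first integral with `Q > 0`, the angle
variable decouples: `Θ' = (n−1)(ω − cos 2Θ)`, and `Q` is recovered from `Θ`. -/
theorem zero_level_reduction
    (n : ℕ) (hn : 2 ≤ n) (A : ℕ → ℝ) (ω : ℝ)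
    (Q Θ : ℝ → ℝ) (hQ : Differentiable ℝ Q) (hΘ : Differentiable ℝ Θ)
    (hQpos : ∀ x : ℝ, 0 < Q x)
    (hQ' : ∀ x : ℝ, deriv Q x = 2 * Q x * Real.sin (2 * Θ x)
      - 2 * Q x ^ n * ∑ s ∈ Finset.range (n + 1), (s : ℝ) * A s * Real.sin (2 * s * Θ x))
    (hΘ' : ∀ x : ℝ, deriv Θ x = -ω + Real.cos (2 * Θ x)
      - n * Q x ^ (n - 1) * ∑ s ∈ Finset.range (n + 1), A s * Real.cos (2 * s * Θ x))
    (hE : ∀ x : ℝ, -ω * Q x + Q x * Real.cos (2 * Θ x)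
      - Q x ^ n * ∑ s ∈ Finset.range (n + 1), A s * Real.cos (2 * s * Θ x) = 0) :
    ∀ x : ℝ,
      deriv Θ x = (n - 1 : ℝ) * (ω - Real.cos (2 * Θ x)) ∧
      ((∑ s ∈ Finset.range (n + 1), A s * Real.cos (2 * s * Θ x)) ≠ 0 →
        Q x ^ (n - 1) = (Real.cos (2 * Θ x) - ω) /
          (∑ s ∈ Finset.range (n + 1), A s * Real.cos (2 * s * Θ x))) := by
  intro x
  set S := ∑ s ∈ Finset.range (n + 1), A s * Real.cos (2 * s * Θ x) with hS
  have hq := (hQpos x).ne'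
  have hpow : Q x ^ n = Q x ^ (n - 1) * Q x := by
    rw [← pow_succ]; congr 1; omega
  have key : Q x ^ (n - 1) * S = Real.cos (2 * Θ x) - ω := by
    have h := hE x
    rw [hpow] at h
    have h2 : Q x * (Q x ^ (n - 1) * S - (Real.cos (2 * Θ x) - ω)) = 0 := by linarith [h]
    rcases mul_eq_zero.mp h2 with h' | h'
    · exact absurd h' hq
    · linarith
  refine ⟨?_, ?_⟩
  · rw [hΘ' x, ← hS, mul_assoc, key]; ring
  · intro hSne
    field_simp
    linarith [key]
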